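/- Let n ≥ 1 and let e : Fin n → Fin n → ℝ satisfy e i j > 0 for all i < j. Define, for i < j, the vector ψ_{ij} : Fin n × Fin n → ℂ by ψ_{ij} (k,l) = (1/√2)·((if k = i and l = j then 1 else 0) − (if k = j and l = i then 1 else 0)), and let C^Q_E := ∑_{i<j} e i j • (the rank-one matrix ψ_{ij} ψ_{ij}ᴴ, i.e., with entries ψ_{ij}(k,l)·conj(ψ_{ij}(k',l'))). Then for all ρA, ρB ∈ Ω_n, decoherence of the marginals decreases the cost: T_{C^Q_E}(diag(ρA), diag(ρB)) ≤ T_{C^Q_E}(ρA, ρB), where diag(ρ) denotes the diagonal matrix with the same diagonal as ρ (which is again a density matrix). -/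

import Mathlib

open Matrix ComplexOrder

/-- A density matrix: positive semidefinite with trace one. -/
def IsDensityMatrix {k : Type*} [Fintype k] [DecidableEq k] (ρ : Matrix k k ℂ) : Prop :=
  ρ.PosSemidef ∧ ρ.trace = 1

/-- Partial trace over the second factor. -/
noncomputable def trB {m n : ℕ} (R : Matrix (Fin m × Fin n) (Fin m × Fin n) ℂ) :
    Matrix (Fin m) (Fin m) ℂ :=
  Matrix.of fun i j => ∑ p, R (i, p) (j, p)

/-- Partial trace over the first factor. -/
noncomputable def trA {m n : ℕ} (R : Matrix (Fin m × Fin n) (Fin m × Fin n) ℂ) :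
    Matrix (Fin n) (Fin n) ℂ :=
  Matrix.of fun p q => ∑ i, R (i, p) (i, q)

/-- The set of quantum couplings of two density matrices. -/
def QCouplings {m n : ℕ} (ρA : Matrix (Fin m) (Fin m) ℂ) (ρB : Matrix (Fin n) (Fin n) ℂ) :
    Set (Matrix (Fin m × Fin n) (Fin m × Fin n) ℂ) :=
  {R | IsDensityMatrix R ∧ trB R = ρA ∧ trA R = ρB}

/-- The quantum optimal transport cost. -/
noncomputable def QOT {m n : ℕ} (C : Matrix (Fin m × Fin n) (Fin m × Fin n) ℂ)
    (ρA : Matrix (Fin m) (Fin m) ℂ) (ρB : Matrix (Fin n) (Fin n) ℂ) : ℝ :=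
  sInf ((fun R => ((C * R).trace).re) '' QCouplings ρA ρB)

/-- The singlet vector `ψ⁻_{ij}` on `Fin n × Fin n`. -/
noncomputable def psiMinus (n : ℕ) (i j : Fin n) : (Fin n × Fin n) → ℂ :=
  fun kl => ((1 / Real.sqrt 2 : ℝ) : ℂ) *
    ((if kl.1 = i ∧ kl.2 = j then 1 else 0) - (if kl.1 = j ∧ kl.2 = i then 1 else 0))

/-- The cost matrix `C^Q_E = ∑_{i<j} e i j • |ψ⁻_{ij}⟩⟨ψ⁻_{ij}|`. -/
noncomputable def CQE (n : ℕ) (e : Fin n → Fin n → ℝ) :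
    Matrix (Fin n × Fin n) (Fin n × Fin n) ℂ :=
  ∑ i : Fin n, ∑ j : Fin n,
    if i < j then e i j • Matrix.vecMulVec (psiMinus n i j) (star (psiMinus n i j))
    else 0

namespace QOTAux

noncomputable def sg (b : Bool) : ℂ := if b then -1 else 1

lemma sg_mul_self (b : Bool) : sg b * sg b = 1 := by cases b <;> simp [sg]

lemma star_sg (b : Bool) : star (sg b) = sg b := by cases b <;> simp [sg]

lemma sg_not (b : Bool) : sg (!b) = - sg b := by cases b <;> simp [sg]

noncomputable def Dmat {n : ℕ} (s : Fin n → Bool) :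
    Matrix (Fin n × Fin n) (Fin n × Fin n) ℂ :=
  Matrix.diagonal (fun a => sg (s a.1) * sg (s a.2))

lemma Dmat_conjTranspose {n : ℕ} (s : Fin n → Bool) : (Dmat s)ᴴ = Dmat s := by
  unfold Dmat
  rw [Matrix.diagonal_conjTranspose]
  have h : (star fun a : Fin n × Fin n => sg (s a.1) * sg (s a.2))
      = fun a : Fin n × Fin n => sg (s a.1) * sg (s a.2) := by
    funext a
    rw [Pi.star_apply, star_mul', star_sg, star_sg, mul_comm]
  rw [h]

lemma Dmat_mul_Dmat {n : ℕ} (s : Fin n → Bool) : Dmat s * Dmat s = 1 := by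
  unfold Dmat
  rw [Matrix.diagonal_mul_diagonal]
  rw [show (fun a : Fin n × Fin n => (sg (s a.1) * sg (s a.2)) * (sg (s a.1) * sg (s a.2))) = fun _ => 1 from ?_, Matrix.diagonal_one]
  funext a
  have h1 := sg_mul_self (s a.1)
  have h2 := sg_mul_self (s a.2)
  calc sg (s a.1) * sg (s a.2) * (sg (s a.1) * sg (s a.2))
      = (sg (s a.1) * sg (s a.1)) * (sg (s a.2) * sg (s a.2)) := by ring
    _ = 1 := by rw [h1, h2, one_mul]

lemma Dmat_conj_apply {n : ℕ} (s : Fin n → Bool)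
    (M : Matrix (Fin n × Fin n) (Fin n × Fin n) ℂ) (a b : Fin n × Fin n) :
    (Dmat s * M * Dmat s) a b
      = (sg (s a.1) * sg (s a.2)) * M a b * (sg (s b.1) * sg (s b.2)) := by
  unfold Dmat
  rw [Matrix.mul_diagonal, Matrix.diagonal_mul]

lemma sum_sg_ne {n : ℕ} {i j : Fin n} (hij : i ≠ j) :
    ∑ s : Fin n → Bool, sg (s i) * sg (s j) = 0 := by
  classical
  set flip : (Fin n → Bool) → (Fin n → Bool) := fun s => Function.update s i (!s i) with hflip
  have hinv : Function.Involutive flip := by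
    intro s
    funext k
    by_cases hk : k = i
    · subst hk; simp [flip]
    · simp [flip, Function.update_of_ne hk]
  set E : Equiv.Perm (Fin n → Bool) := Function.Involutive.toPerm flip hinv with hE
  have hsum : ∑ s : Fin n → Bool, sg (s i) * sg (s j)
      = ∑ s : Fin n → Bool, sg ((E s) i) * sg ((E s) j) :=
    (Equiv.sum_comp E (fun s => sg (s i) * sg (s j))).symm
  have hterm : ∀ s : Fin n → Bool,
      sg ((E s) i) * sg ((E s) j) = -(sg (s i) * sg (s j)) := by
    intro s
    have hEs : E s = flip s := rfl
    have h1 : (E s) i = !s i := by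
      rw [hEs]; simp [flip]
    have h2 : (E s) j = s j := by
      rw [hEs]; simp [flip, Function.update_of_ne (Ne.symm hij)]
    rw [h1, h2, sg_not]
    ring
  rw [Finset.sum_congr rfl (fun s _ => hterm s), Finset.sum_neg_distrib] at hsum
  linear_combination (1/2 : ℂ) * hsum

lemma sum_sg {n : ℕ} (i j : Fin n) :
    ∑ s : Fin n → Bool, sg (s i) * sg (s j)
      = if i = j then ((2 : ℂ) ^ n) else 0 := by
  by_cases hij : i = j
  · subst hij
    simp only [if_pos rfl]
    rw [Finset.sum_congr rfl (fun s _ => sg_mul_self (s i))]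
    simp [Finset.card_univ]
  · rw [if_neg hij]
    exact sum_sg_ne hij

lemma posSemidef_sum {k ι : Type*} [Fintype k] (s : Finset ι) (f : ι → Matrix k k ℂ)
    (h : ∀ i ∈ s, (f i).PosSemidef) : (∑ i ∈ s, f i).PosSemidef :=
  Finset.sum_induction f _ (fun _ _ ha hb => ha.add hb) Matrix.PosSemidef.zero h

lemma posSemidef_smul {k : Type*} [Fintype k] {M : Matrix k k ℂ} (hM : M.PosSemidef)
    {c : ℂ} (hc : 0 ≤ c) : (c • M).PosSemidef := by
  have hcr : star c = c := by
    rw [Complex.star_def, Complex.conj_eq_iff_im]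
    exact (Complex.nonneg_iff.mp hc).2.symm
  constructor
  · show (c • M)ᴴ = c • M
    rw [Matrix.conjTranspose_smul, hcr, hM.1]
  · intro x
    exact (hM.smul hc).2 x

lemma posSemidef_realSmul {k : Type*} [Fintype k] {M : Matrix k k ℂ} (hM : M.PosSemidef)
    {c : ℝ} (hc : 0 ≤ c) : (c • M).PosSemidef := by
  have : (c • M) = ((c : ℂ) • M) := by
    ext a b
    simp [Complex.real_smul]
  rw [this]
  exact posSemidef_smul hM (Complex.zero_le_real.mpr hc)

lemma posSemidef_vecMulVec {k : Type*} [Fintype k] (x : k → ℂ) :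
    (Matrix.vecMulVec x (star x)).PosSemidef := by
  have : Matrix.vecMulVec x (star x) = Matrix.replicateCol Unit x * (Matrix.replicateCol Unit x)ᴴ := by
    rw [Matrix.conjTranspose_replicateCol, ← Matrix.vecMulVec_eq Unit]
  rw [this]
  exact Matrix.posSemidef_self_mul_conjTranspose _

lemma psd_diag_nonneg {k : Type*} [Fintype k] [DecidableEq k] {M : Matrix k k ℂ}
    (hM : M.PosSemidef) (i : k) : 0 ≤ M i i := by
  exact hM.diag_nonneg

lemma psd_trace_re_nonneg {k : Type*} [Fintype k] [DecidableEq k] {M : Matrix k k ℂ}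
    (hM : M.PosSemidef) : 0 ≤ (M.trace).re := by
  rw [Matrix.trace]
  rw [Complex.re_sum]
  refine Finset.sum_nonneg fun i _ => ?_
  exact (Complex.nonneg_iff.mp (psd_diag_nonneg hM i)).1

lemma psd_exists_eq {k : Type*} [Fintype k] [DecidableEq k] {M : Matrix k k ℂ}
    (hM : M.PosSemidef) : ∃ B : Matrix k k ℂ, M = Bᴴ * B := by
  open MatrixOrder in
  obtain ⟨B, hB⟩ := CStarAlgebra.nonneg_iff_eq_star_mul_self.mp hM.nonneg
  exact ⟨B, hB⟩

lemma trace_mul_psd_re_nonneg {k : Type*} [Fintype k] [DecidableEq k]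
    {C R : Matrix k k ℂ} (hC : C.PosSemidef) (hR : R.PosSemidef) :
    0 ≤ ((C * R).trace).re := by
  obtain ⟨B, hB⟩ := psd_exists_eq hR
  have h1 : C * R = C * Bᴴ * B := by rw [hB, Matrix.mul_assoc]
  rw [h1, Matrix.trace_mul_cycle]
  exact psd_trace_re_nonneg (hC.mul_mul_conjTranspose_same B)

lemma CQE_posSemidef (n : ℕ) (e : Fin n → Fin n → ℝ)
    (he : ∀ i j : Fin n, i < j → 0 < e i j) : (CQE n e).PosSemidef := by
  apply posSemidef_sum
  intro i _
  apply posSemidef_sum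
  intro j _
  by_cases hij : i < j
  · rw [if_pos hij]
    exact posSemidef_realSmul (posSemidef_vecMulVec _) (le_of_lt (he i j hij))
  · rw [if_neg hij]
    exact Matrix.PosSemidef.zero

lemma psi_sign {n : ℕ} (s : Fin n → Bool) (i j : Fin n) (a : Fin n × Fin n) :
    (sg (s a.1) * sg (s a.2)) * psiMinus n i j a
      = (sg (s i) * sg (s j)) * psiMinus n i j a := by
  obtain ⟨k, l⟩ := a
  by_cases h1 : k = i ∧ l = j
  · obtain ⟨rfl, rfl⟩ := h1; rfl
  · by_cases h2 : k = j ∧ l = i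
    · obtain ⟨rfl, rfl⟩ := h2; ring
    · simp [psiMinus, h1, h2]

lemma Dmat_CQE_Dmat {n : ℕ} (e : Fin n → Fin n → ℝ) (s : Fin n → Bool) :
    Dmat s * CQE n e * Dmat s = CQE n e := by
  ext a b
  rw [Dmat_conj_apply]
  simp only [CQE, Matrix.sum_apply]
  rw [Finset.mul_sum, Finset.sum_mul]
  refine Finset.sum_congr rfl fun i _ => ?_
  rw [Finset.mul_sum, Finset.sum_mul]
  refine Finset.sum_congr rfl fun j _ => ?_
  by_cases hij : i < j
  · simp only [if_pos hij, Matrix.smul_apply, Matrix.vecMulVec_apply, Pi.star_apply,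
      smul_eq_mul, Complex.real_smul]
    set d₁ := sg (s a.1) * sg (s a.2) with hd₁
    set d₂ := sg (s b.1) * sg (s b.2) with hd₂
    set σ := sg (s i) * sg (s j) with hσ
    have h1 : d₁ * psiMinus n i j a = σ * psiMinus n i j a := psi_sign s i j a
    have h2 : star (psiMinus n i j b) * d₂ = σ * star (psiMinus n i j b) := by
      have hstar : star d₂ = d₂ := by
        rw [hd₂, star_mul', star_sg, star_sg, mul_comm]
      have hsσ : star σ = σ := by
        rw [hσ, star_mul', star_sg, star_sg, mul_comm]
      calc star (psiMinus n i j b) * d₂ = star (d₂ * psiMinus n i j b) := by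
            rw [star_mul', hstar, mul_comm]
        _ = star (σ * psiMinus n i j b) := by rw [psi_sign s i j b]
        _ = σ * star (psiMinus n i j b) := by rw [star_mul', hsσ, mul_comm]
    have hσσ : σ * σ = 1 := by
      rw [hσ]
      calc sg (s i) * sg (s j) * (sg (s i) * sg (s j))
          = (sg (s i) * sg (s i)) * (sg (s j) * sg (s j)) := by ring
        _ = 1 := by rw [sg_mul_self, sg_mul_self, one_mul]
    calc d₁ * ((e i j : ℂ) * (psiMinus n i j a * star (psiMinus n i j b))) * d₂
        = (e i j : ℂ) * ((d₁ * psiMinus n i j a) * (star (psiMinus n i j b) * d₂)) := by ring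
      _ = (e i j : ℂ) * ((σ * psiMinus n i j a) * (σ * star (psiMinus n i j b))) := by
          rw [h1, h2]
      _ = (e i j : ℂ) * ((σ * σ) * (psiMinus n i j a * star (psiMinus n i j b))) := by ring
      _ = (e i j : ℂ) * (psiMinus n i j a * star (psiMinus n i j b)) := by
          rw [hσσ, one_mul]
  · simp [if_neg hij]

end QOTAux

namespace QOTAux

variable {n : ℕ}

noncomputable def Rtil (R : Matrix (Fin n × Fin n) (Fin n × Fin n) ℂ) :
    Matrix (Fin n × Fin n) (Fin n × Fin n) ℂ :=
  ((2 : ℂ) ^ n)⁻¹ • ∑ s : Fin n → Bool, Dmat s * R * Dmat s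

lemma two_pow_ne : ((2 : ℂ) ^ n) ≠ 0 := pow_ne_zero _ two_ne_zero

lemma c_nonneg : (0 : ℂ) ≤ ((2 : ℂ) ^ n)⁻¹ := by
  have h : ((2 : ℂ) ^ n)⁻¹ = ((((2 : ℝ) ^ n)⁻¹ : ℝ) : ℂ) := by
    push_cast
    ring
  rw [h, Complex.zero_le_real]
  positivity

lemma Rtil_psd {R : Matrix (Fin n × Fin n) (Fin n × Fin n) ℂ} (hR : R.PosSemidef) :
    (Rtil R).PosSemidef := by
  refine posSemidef_smul ?_ c_nonneg
  refine posSemidef_sum _ _ fun s _ => ?_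
  have h := hR.conjTranspose_mul_mul_same (Dmat s)
  rwa [Dmat_conjTranspose] at h

lemma trace_Dconj (s : Fin n → Bool) (M : Matrix (Fin n × Fin n) (Fin n × Fin n) ℂ) :
    (Dmat s * M * Dmat s).trace = M.trace := by
  rw [Matrix.trace_mul_cycle, Dmat_mul_Dmat, one_mul]

lemma card_bool_fun : (Finset.univ : Finset (Fin n → Bool)).card = 2 ^ n := by
  simp [Finset.card_univ]

lemma Rtil_trace {R : Matrix (Fin n × Fin n) (Fin n × Fin n) ℂ} (hR : R.trace = 1) :
    (Rtil R).trace = 1 := by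
  rw [Rtil, Matrix.trace_smul, Matrix.trace_sum, smul_eq_mul]
  rw [Finset.sum_congr rfl fun s _ => (trace_Dconj s R).trans hR]
  rw [Finset.sum_const, card_bool_fun, nsmul_eq_mul, mul_one]
  push_cast
  exact inv_mul_cancel₀ two_pow_ne

lemma cost_eq (e : Fin n → Fin n → ℝ) (R : Matrix (Fin n × Fin n) (Fin n × Fin n) ℂ) :
    (CQE n e * Rtil R).trace = (CQE n e * R).trace := by
  have hterm : ∀ s : Fin n → Bool,
      (CQE n e * (Dmat s * R * Dmat s)).trace = (CQE n e * R).trace := by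
    intro s
    have h : CQE n e * (Dmat s * R * Dmat s) = (CQE n e * Dmat s * R) * Dmat s := by
      simp only [Matrix.mul_assoc]
    rw [h, Matrix.trace_mul_comm]
    have h2 : Dmat s * (CQE n e * Dmat s * R) = (Dmat s * CQE n e * Dmat s) * R := by
      simp only [Matrix.mul_assoc]
    rw [h2, Dmat_CQE_Dmat]
  rw [Rtil, Matrix.mul_smul, Matrix.trace_smul, Matrix.mul_sum, Matrix.trace_sum, smul_eq_mul]
  rw [Finset.sum_congr rfl fun s _ => hterm s]
  rw [Finset.sum_const, card_bool_fun, nsmul_eq_mul]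
  push_cast
  rw [← mul_assoc, inv_mul_cancel₀ two_pow_ne, one_mul]

lemma Rtil_apply_factor (R : Matrix (Fin n × Fin n) (Fin n × Fin n) ℂ)
    (i j k l : Fin n) :
    Rtil R (i, k) (j, l)
      = ((2 : ℂ) ^ n)⁻¹ * ∑ s : Fin n → Bool,
          (sg (s i) * sg (s k)) * R (i, k) (j, l) * (sg (s j) * sg (s l)) := by
  rw [Rtil, Matrix.smul_apply, Matrix.sum_apply, smul_eq_mul]
  congr 1
  exact Finset.sum_congr rfl fun s _ => Dmat_conj_apply s R (i, k) (j, l)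

lemma Rtil_trB (R : Matrix (Fin n × Fin n) (Fin n × Fin n) ℂ) :
    trB (Rtil R) = Matrix.diagonal (fun i => trB R i i) := by
  ext i j
  have happ : ∀ p : Fin n, Rtil R (i, p) (j, p)
      = ((2 : ℂ) ^ n)⁻¹ * ((∑ s : Fin n → Bool, sg (s i) * sg (s j)) * R (i, p) (j, p)) := by
    intro p
    rw [Rtil_apply_factor]
    congr 1
    rw [Finset.sum_mul]
    refine Finset.sum_congr rfl fun s _ => ?_
    have hp := sg_mul_self (s p)
    calc (sg (s i) * sg (s p)) * R (i, p) (j, p) * (sg (s j) * sg (s p))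
        = (sg (s i) * sg (s j)) * R (i, p) (j, p) * (sg (s p) * sg (s p)) := by ring
      _ = sg (s i) * sg (s j) * R (i, p) (j, p) := by rw [hp, mul_one]
  show (∑ p, Rtil R (i, p) (j, p)) = _
  rw [Finset.sum_congr rfl fun p _ => happ p, ← Finset.mul_sum, ← Finset.mul_sum, sum_sg]
  by_cases hij : i = j
  · subst hij
    rw [if_pos rfl, Matrix.diagonal_apply_eq]
    show _ = ∑ p, R (i, p) (i, p)
    rw [← mul_assoc, inv_mul_cancel₀ two_pow_ne, one_mul]
  · rw [if_neg hij, Matrix.diagonal_apply_ne _ hij]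
    simp

lemma Rtil_trA (R : Matrix (Fin n × Fin n) (Fin n × Fin n) ℂ) :
    trA (Rtil R) = Matrix.diagonal (fun p => trA R p p) := by
  ext p q
  have happ : ∀ i : Fin n, Rtil R (i, p) (i, q)
      = ((2 : ℂ) ^ n)⁻¹ * ((∑ s : Fin n → Bool, sg (s p) * sg (s q)) * R (i, p) (i, q)) := by
    intro i
    rw [Rtil_apply_factor]
    congr 1
    rw [Finset.sum_mul]
    refine Finset.sum_congr rfl fun s _ => ?_
    have hi := sg_mul_self (s i)
    calc (sg (s i) * sg (s p)) * R (i, p) (i, q) * (sg (s i) * sg (s q))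
        = (sg (s p) * sg (s q)) * R (i, p) (i, q) * (sg (s i) * sg (s i)) := by ring
      _ = sg (s p) * sg (s q) * R (i, p) (i, q) := by rw [hi, mul_one]
  show (∑ i, Rtil R (i, p) (i, q)) = _
  rw [Finset.sum_congr rfl fun i _ => happ i, ← Finset.mul_sum, ← Finset.mul_sum, sum_sg]
  by_cases hpq : p = q
  · subst hpq
    rw [if_pos rfl, Matrix.diagonal_apply_eq]
    show _ = ∑ i, R (i, p) (i, p)
    rw [← mul_assoc, inv_mul_cancel₀ two_pow_ne, one_mul]
  · rw [if_neg hpq, Matrix.diagonal_apply_ne _ hpq]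
    simp

open Kronecker in
lemma exists_coupling {ρA ρB : Matrix (Fin n) (Fin n) ℂ}
    (hA : IsDensityMatrix ρA) (hB : IsDensityMatrix ρB) :
    (QCouplings ρA ρB).Nonempty := by
  refine ⟨ρA ⊗ₖ ρB, ⟨⟨?_, ?_⟩, ?_, ?_⟩⟩
  · obtain ⟨X, hX⟩ := psd_exists_eq hA.1
    obtain ⟨Y, hY⟩ := psd_exists_eq hB.1
    have hct : (X ⊗ₖ Y)ᴴ = Xᴴ ⊗ₖ Yᴴ := by
      ext a b
      simp [Matrix.conjTranspose_apply, Matrix.kroneckerMap_apply, star_mul', mul_comm]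
    rw [hX, hY, Matrix.mul_kronecker_mul, ← hct]
    exact Matrix.posSemidef_conjTranspose_mul_self _
  · rw [Matrix.trace_kronecker, hA.2, hB.2, mul_one]
  · ext i j
    show (∑ p, (ρA ⊗ₖ ρB) (i, p) (j, p)) = ρA i j
    have htr : ∑ p, ρB p p = 1 := hB.2
    simp only [Matrix.kroneckerMap_apply]
    rw [← Finset.mul_sum, htr, mul_one]
  · ext p q
    show (∑ i, (ρA ⊗ₖ ρB) (i, p) (i, q)) = ρB p q
    have htr : ∑ i, ρA i i = 1 := hA.2
    simp only [Matrix.kroneckerMap_apply]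
    rw [← Finset.sum_mul, htr, one_mul]

end QOTAux

open QOTAux

/-- decoherence of the marginals decreases the `C^Q_E` transport cost. -/
theorem qot_decoherence_decreases (n : ℕ) (hn : 1 ≤ n) (e : Fin n → Fin n → ℝ)
    (he : ∀ i j : Fin n, i < j → 0 < e i j)
    (ρA ρB : Matrix (Fin n) (Fin n) ℂ)
    (hA : IsDensityMatrix ρA) (hB : IsDensityMatrix ρB) :
    QOT (CQE n e) (Matrix.diagonal fun i => ρA i i) (Matrix.diagonal fun i => ρB i i) ≤
      QOT (CQE n e) ρA ρB := by
  classical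
  have hCpsd := CQE_posSemidef n e he
  have hbdd : BddBelow ((fun R => ((CQE n e * R).trace).re) ''
      QCouplings (Matrix.diagonal fun i => ρA i i) (Matrix.diagonal fun i => ρB i i)) := by
    refine ⟨0, ?_⟩
    rintro r ⟨R, hRmem, rfl⟩
    exact trace_mul_psd_re_nonneg hCpsd hRmem.1.1
  have hne : ((fun R => ((CQE n e * R).trace).re) '' QCouplings ρA ρB).Nonempty :=
    (exists_coupling hA hB).image _
  unfold QOT
  refine le_csInf hne ?_
  rintro b ⟨R, ⟨hRd, hRA, hRB⟩, rfl⟩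
  have hmem : Rtil R ∈ QCouplings (Matrix.diagonal fun i => ρA i i)
      (Matrix.diagonal fun i => ρB i i) := by
    refine ⟨⟨Rtil_psd hRd.1, Rtil_trace hRd.2⟩, ?_, ?_⟩
    · rw [Rtil_trB, hRA]
    · rw [Rtil_trA, hRB]
  calc sInf ((fun R => ((CQE n e * R).trace).re) ''
        QCouplings (Matrix.diagonal fun i => ρA i i) (Matrix.diagonal fun i => ρB i i))
      ≤ ((CQE n e * Rtil R).trace).re := csInf_le hbdd ⟨Rtil R, hmem, rfl⟩
    _ = ((CQE n e * R).trace).re := by rw [cost_eq]
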